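/- Let p be an odd prime, k a natural number, and x a natural number with 0 < x < 2^k and 2x < p. Then the number of masks t ∈ {0, 1, …, p − x − 1} (exactly those masks on which the unt runcated stochastic sign is correct for the positive value x) satisfying ⌊(x + t)/2^k⌋ = ⌊t/2^k⌋ equals ⌊(p − x)/2^k⌋ · (2^k − x) + min((p − x) mod 2^k, 2^k − x). -/

import Mathlib

lemma count_mod_lt (m c : ℕ) (hm : 0 < m) (hc : c ≤ m) (N : ℕ) :
    ((Finset.range N).filter (fun t => t % m < c)).card
      = (N / m) * c + min (N % m) c := by
  induction N with
  | zero => simp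
  | succ n ih =>
    rw [Finset.range_add_one, Finset.filter_insert]
    have hlt : n % m < m := Nat.mod_lt _ hm
    have hdm : n / m * m + n % m = n := by
      have h := Nat.div_add_mod n m; rw [Nat.mul_comm] at h; exact h
    by_cases hr : n % m + 1 = m
    · have e : n + 1 = (n / m + 1) * m := by rw [add_mul, one_mul]; omega
      have hdiv : (n + 1) / m = n / m + 1 := by
        rw [e, Nat.mul_div_cancel _ hm]
      have hmod : (n + 1) % m = 0 := by
        rw [e, Nat.mul_mod_left]
      by_cases h : n % m < c
      · rw [if_pos h, Finset.card_insert_of_notMem (by simp), ih, hdiv, hmod,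
          add_mul, one_mul]
        have : c = m := by omega
        omega
      · rw [if_neg h, ih, hdiv, hmod, add_mul, one_mul]
        omega
    · have e : n + 1 = n % m + 1 + n / m * m := by omega
      have hdiv : (n + 1) / m = n / m := by
        rw [e, Nat.add_mul_div_right _ _ hm, Nat.div_eq_of_lt (by omega), zero_add]
      have hmod : (n + 1) % m = n % m + 1 := by
        rw [e, Nat.add_mul_mod_self_right, Nat.mod_eq_of_lt (by omega)]
      by_cases h : n % m < c
      · rw [if_pos h, Finset.card_insert_of_notMem (by simp), ih, hdiv, hmod]
        omega
      · rw [if_neg h, ih, hdiv, hmod]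
        omega

/-- For an odd prime `p` and a small positive field value `x` (`0 < x < 2^k`,
`2x < p`), among the masks `t ∈ {0,…, p - x - 1}` (exactly those on which the
untruncated stochastic sign is correct for `x`), the number satisfying the
truncation fault condition `⌊(x + t)/2^k⌋ = ⌊t/2^k⌋` equals
`⌊(p - x)/2^k⌋ · (2^k - x) + min ((p - x) % 2^k) (2^k - x)`. -/
theorem truncated_fault_count_conditional (p k x : ℕ) (hp : Nat.Prime p)
    (hodd : Odd p) (hx : 0 < x) (hxk : x < 2 ^ k) (hxp : 2 * x < p) :
    ((Finset.range (p - x)).filter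
      (fun t => (x + t) / 2 ^ k = t / 2 ^ k)).card
      = ((p - x) / 2 ^ k) * (2 ^ k - x) + min ((p - x) % 2 ^ k) (2 ^ k - x) := by
  have hm : 0 < 2 ^ k := Nat.pow_pos (by norm_num)
  have key : ∀ t, ((x + t) / 2 ^ k = t / 2 ^ k) ↔ t % 2 ^ k < 2 ^ k - x := by
    intro t
    have hdm : t / 2 ^ k * 2 ^ k + t % 2 ^ k = t := by
      have h := Nat.div_add_mod t (2 ^ k); rw [Nat.mul_comm] at h; exact h
    have e : x + t = x + t % 2 ^ k + t / 2 ^ k * 2 ^ k := by omega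
    rw [e, Nat.add_mul_div_right _ _ hm]
    have h0 : (x + t % 2 ^ k) / 2 ^ k = 0 ↔ x + t % 2 ^ k < 2 ^ k :=
      by rw [Nat.div_eq_zero_iff]; omega
    have hmod : t % 2 ^ k < 2 ^ k := Nat.mod_lt _ hm
    omega
  rw [Finset.filter_congr (fun t _ => by rw [key t])]
  exact count_mod_lt (2 ^ k) (2 ^ k - x) hm (by omega) (p - x)
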